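/- In the pizza game on a pizza with an even number of pieces, the first player (Alice) has a strategy guaranteeing her eaten pieces have total size at least half the total size of the pizza. -/
import Mathlib


/-!
Pizza game model.  Pieces are indexed by `ZMod n`.  A play is determined by
Alice's starting piece `p` and a sequence of direction choices
`d : ℕ → Bool`: the choice `d t` determines the piece eaten at move `t+1`
(`true` = clockwise end of the eaten interval, `false` = counterclockwise).
Moves are numbered `0, …, n-1`; Alice moves at even indices, Bob at odd ones,
so the choice `d t` is made by Bob when `t` is even and by Alice when `t` is odd.
A strategy is a function from the list of previous direction choices to a choice.
-/

/-- The history of direction choices after `t` choices, when Alice plays `σ`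
and Bob plays `τ`. -/
def hist (σ τ : List Bool → Bool) : ℕ → List Bool
  | 0 => []
  | t + 1 => hist σ τ t ++ [if Even t then τ (hist σ τ t) else σ (hist σ τ t)]

/-- The direction chosen at step `t` (determining the piece eaten at move `t+1`,
which belongs to Alice iff `t` is odd): Bob chooses it if `t` is even,
Alice if `t` is odd. -/
def choice (σ τ : List Bool → Bool) (t : ℕ) : Bool :=
  if Even t then τ (hist σ τ t) else σ (hist σ τ t)

/-- The piece eaten at move `t`, given starting piece `p` and direction
choices `d`. -/
def piece (n : ℕ) (p : ZMod n) (d : ℕ → Bool) : ℕ → ZMod n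
  | 0 => p
  | t + 1 =>
      if d t then
        p + ((((Finset.range (t + 1)).filter fun i => d i = true).card : ℕ) : ZMod n)
      else
        p - ((((Finset.range (t + 1)).filter fun i => d i = false).card : ℕ) : ZMod n)

/-- Alice's outcome: total size of the pieces eaten at even-numbered moves. -/
noncomputable def aliceOutcome (n : ℕ) [NeZero n] (s : ZMod n → ℝ) (p : ZMod n)
    (σ τ : List Bool → Bool) : ℝ :=
  ∑ t ∈ Finset.range n, if Even t then s (piece n p (choice σ τ) t) else 0

/-- Bob's outcome: total size of the pieces eaten at odd-numbered moves. -/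
noncomputable def bobOutcome (n : ℕ) [NeZero n] (s : ZMod n → ℝ) (p : ZMod n)
    (σ τ : List Bool → Bool) : ℝ :=
  ∑ t ∈ Finset.range n, if Even t then 0 else s (piece n p (choice σ τ) t)

/-- The follow-Bob strategy: Alice always repeats Bob's previous direction
choice, i.e. she picks the piece just revealed by Bob. -/
def followBob : List Bool → Bool := fun L => L.getLastD true


namespace PizzaAux
open Finset

def cA (d : ℕ → Bool) (t : ℕ) : ℕ := ((Finset.range t).filter fun i => d i = true).card
def cB (d : ℕ → Bool) (t : ℕ) : ℕ := ((Finset.range t).filter fun i => d i = false).card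

def off (d : ℕ → Bool) : ℕ → ℤ
  | 0 => 0
  | t+1 => if d t then (cA d (t+1) : ℤ) else -(cB d (t+1) : ℤ)

lemma cA_succ (d : ℕ → Bool) (t : ℕ) :
    cA d (t+1) = cA d t + if d t then 1 else 0 := by
  unfold cA
  rw [Finset.range_add_one, Finset.filter_insert]
  split <;> simp [Finset.card_insert_of_notMem]

lemma cB_succ (d : ℕ → Bool) (t : ℕ) :
    cB d (t+1) = cB d t + if d t then 0 else 1 := by
  unfold cB
  rw [Finset.range_add_one, Finset.filter_insert]
  rcases h : d t <;> simp [Finset.card_insert_of_notMem]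

lemma cA_add_cB (d : ℕ → Bool) (t : ℕ) : cA d t + cB d t = t := by
  induction t with
  | zero => simp [cA, cB]
  | succ t ih => rw [cA_succ, cB_succ]; cases d t <;> simp <;> omega

lemma cA_mono (d : ℕ → Bool) {t t' : ℕ} (h : t ≤ t') : cA d t ≤ cA d t' :=
  Finset.card_le_card (Finset.filter_subset_filter _ (Finset.range_subset_range.2 h))

lemma cB_mono (d : ℕ → Bool) {t t' : ℕ} (h : t ≤ t') : cB d t ≤ cB d t' :=
  Finset.card_le_card (Finset.filter_subset_filter _ (Finset.range_subset_range.2 h))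

lemma off_bounds (d : ℕ → Bool) (t : ℕ) :
    -(cB d t : ℤ) ≤ off d t ∧ off d t ≤ (cA d t : ℤ) := by
  cases t with
  | zero => simp [off]
  | succ t =>
    simp only [off]
    split <;> omega

lemma off_ne (d : ℕ → Bool) {t t' : ℕ} (h : t < t') : off d t ≠ off d t' := by
  obtain ⟨u, rfl⟩ : ∃ u, t' = u + 1 := ⟨t' - 1, by omega⟩
  have hb := off_bounds d t
  have h1 : cA d t ≤ cA d u := cA_mono d (by omega)
  have h2 : cB d t ≤ cB d u := cB_mono d (by omega)
  have hA := cA_succ d u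
  have hB := cB_succ d u
  simp only [off]
  split <;> simp_all <;> omega

lemma off_diff_le (d : ℕ → Bool) {t t' : ℕ} (h : t ≤ t') : |off d t - off d t'| ≤ t' := by
  have hb := off_bounds d t
  have hb' := off_bounds d t'
  have h1 : cA d t ≤ cA d t' := cA_mono d h
  have h2 : cB d t ≤ cB d t' := cB_mono d h
  have h3 := cA_add_cB d t'
  rw [abs_le]
  omega

lemma piece_eq (n : ℕ) (p : ZMod n) (d : ℕ → Bool) (t : ℕ) :
    piece n p d t = p + ((off d t : ℤ) : ZMod n) := by
  cases t with
  | zero => simp [piece, off]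
  | succ t =>
    simp only [piece, off, cA, cB]
    split <;> push_cast <;> ring

lemma piece_ne (n : ℕ) [NeZero n] (p : ZMod n) (d : ℕ → Bool) {t t' : ℕ}
    (h : t < t') (hn : t' < n) : piece n p d t ≠ piece n p d t' := by
  intro heq
  rw [piece_eq, piece_eq, add_right_inj] at heq
  have hz : ((off d t - off d t' : ℤ) : ZMod n) = 0 := by push_cast; rw [heq]; ring
  rw [ZMod.intCast_zmod_eq_zero_iff_dvd] at hz
  have h1 := off_ne d h
  have h2 := off_diff_le d h.le
  have h3 : (n : ℤ) ≤ |off d t - off d t'| :=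
    Int.le_of_dvd (abs_pos.2 (sub_ne_zero.2 h1)) ((dvd_abs _ _).2 hz)
  have : (t' : ℤ) < n := by exact_mod_cast hn
  omega

lemma piece_injOn (n : ℕ) [NeZero n] (p : ZMod n) (d : ℕ → Bool) :
    ∀ t ∈ Finset.range n, ∀ t' ∈ Finset.range n,
      piece n p d t = piece n p d t' → t = t' := by
  intro t ht t' ht' heq
  simp only [Finset.mem_range] at ht ht'
  rcases lt_trichotomy t t' with h | h | h
  · exact absurd heq (piece_ne n p d h ht')
  · exact h
  · exact absurd heq.symm (piece_ne n p d h ht)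

lemma piece_image (n : ℕ) [NeZero n] (p : ZMod n) (d : ℕ → Bool) :
    (Finset.range n).image (piece n p d) = Finset.univ := by
  apply Finset.eq_univ_of_card
  rw [Finset.card_image_of_injOn, Finset.card_range, ZMod.card]
  intro t ht t' ht' heq
  exact piece_injOn n p d t ht t' ht' heq

/-- Parity counting lemma under the pairing hypothesis. -/
lemma cA_even (d : ℕ → Bool) (hd : ∀ k, d (2*k+1) = d (2*k)) (k : ℕ) :
    cA d (2*k) % 2 = 0 ∧ cB d (2*k) % 2 = 0 := by
  induction k with
  | zero => simp [cA, cB]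
  | succ k ih =>
    have e1 : 2*(k+1) = (2*k+1)+1 := by ring
    rw [e1, cA_succ, cB_succ, cA_succ, cB_succ, hd k]
    cases d (2*k) <;> simp <;> omega

lemma off_parity (d : ℕ → Bool) (hd : ∀ k, d (2*k+1) = d (2*k)) (t : ℕ) :
    off d t % 2 = (t : ℤ) % 2 := by
  rcases Nat.even_or_odd t with ⟨k, hk⟩ | ⟨k, hk⟩
  · subst hk
    have h := cA_even d hd k
    have h3 := cA_add_cB d (k + k)
    have e1 : k + k = 2 * k := by ring
    rw [e1] at h3 ⊢
    cases k with
    | zero => simp [off]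
    | succ k =>
      have e2 : 2*(k+1) = (2*k+1)+1 := by ring
      rw [e2] at h3 ⊢
      simp only [off]
      rw [cA_succ, cB_succ, cA_succ, cB_succ, hd k] at h3 ⊢
      have h' := cA_even d hd k
      split <;> simp_all <;> omega
  · subst hk
    have h := cA_even d hd k
    simp only [off]
    rw [cA_succ, cB_succ]
    split <;> simp_all <;> omega

end PizzaAux

open PizzaAux in
lemma choice_pair (τ : List Bool → Bool) (k : ℕ) :
    choice followBob τ (2*k+1) = choice followBob τ (2*k) := by
  have he : Even (2*k) := even_two_mul k
  have ho : ¬ Even (2*k+1) := by simp [Nat.even_add_one, he]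
  simp only [choice, if_pos he, if_neg ho]
  have : hist followBob τ (2*k+1)
      = hist followBob τ (2*k) ++ [τ (hist followBob τ (2*k))] := by
    simp [hist, if_pos he]
  rw [this, followBob, List.getLastD_concat]

/-- In the pizza game on a pizza with an even number of pieces, Alice has a
strategy guaranteeing her at least half of the total size. -/
theorem stmt1 (n : ℕ) [NeZero n] (hn : Even n) (s : ZMod n → ℝ)
    (hs : ∀ i, 0 ≤ s i) :
    ∃ (p : ZMod n) (σ : List Bool → Bool), ∀ τ : List Bool → Bool,
      (∑ i, s i) / 2 ≤ aliceOutcome n s p σ τ := by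
  classical
  have hpos : 0 < n := Nat.pos_of_ne_zero (NeZero.ne n)
  have h2 : (2 : ℕ) ∣ n := hn.two_dvd
  let φ : ZMod n →+* ZMod 2 := ZMod.castHom h2 (ZMod 2)
  -- the sum over a parity class
  set cls : ZMod 2 → ℝ := fun q => ∑ i ∈ Finset.univ.filter (fun i => φ i = q), s i with hcls
  -- key: Alice's outcome with followBob equals the parity-class sum of p
  have key : ∀ (p : ZMod n) (τ : List Bool → Bool),
      aliceOutcome n s p followBob τ = cls (φ p) := by
    intro p τ
    set d := choice followBob τ with hd
    have hpair : ∀ k, d (2*k+1) = d (2*k) := fun k => choice_pair τ k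
    have hparity : ∀ t : ℕ, φ (piece n p d t) = φ p + (t : ZMod 2) := by
      intro t
      rw [PizzaAux.piece_eq, map_add, map_intCast]
      congr 1
      have := PizzaAux.off_parity d hpair t
      have h4 : ((PizzaAux.off d t : ℤ) : ZMod 2) = ((t : ℤ) : ZMod 2) := by
        rw [ZMod.intCast_eq_intCast_iff]
        exact this
      rw [h4]; push_cast; ring
    rw [aliceOutcome, ← Finset.sum_filter]
    refine Finset.sum_bij (fun t _ => piece n p d t) ?_ ?_ ?_ ?_
    · intro t ht
      simp only [Finset.mem_filter, Finset.mem_range] at ht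
      simp only [Finset.mem_filter, Finset.mem_univ, true_and]
      rw [hparity]
      obtain ⟨k, hk⟩ := ht.2
      have : ((t : ℕ) : ZMod 2) = 0 := by
        rw [ZMod.natCast_eq_zero_iff]
        exact ⟨k, by omega⟩
      rw [this, add_zero]
    · intro t ht t' ht' heq
      simp only [Finset.mem_filter, Finset.mem_range] at ht ht'
      exact PizzaAux.piece_injOn n p d t (Finset.mem_range.2 ht.1) t'
        (Finset.mem_range.2 ht'.1) heq
    · intro i hi
      simp only [Finset.mem_filter, Finset.mem_univ, true_and] at hi
      have : i ∈ (Finset.range n).image (piece n p d) := by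
        rw [PizzaAux.piece_image]; exact Finset.mem_univ i
      obtain ⟨t, ht, hti⟩ := Finset.mem_image.1 this
      refine ⟨t, ?_, hti⟩
      simp only [Finset.mem_filter, Finset.mem_range, Finset.mem_range.1 ht, true_and]
      rw [← hti, hparity] at hi
      have h5 : ((t : ℕ) : ZMod 2) = 0 := by
        have := hi
        rwa [add_eq_left] at this
      rw [ZMod.natCast_eq_zero_iff] at h5
      exact (even_iff_two_dvd).2 h5
    · intro t _
      rfl
  -- the two parity classes partition the pizza
  have hsplit : cls 0 + cls 1 = ∑ i, s i := by
    rw [hcls]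
    simp only
    rw [show (Finset.univ.filter fun i => φ i = (1 : ZMod 2))
          = Finset.univ.filter fun i => ¬ φ i = 0 from
        Finset.filter_congr (fun x _ => by
          have h01 : ∀ y : ZMod 2, y = 0 ∨ y = 1 := by decide
          rcases h01 (φ x) with h | h <;> simp [h])]
    exact Finset.sum_filter_add_sum_filter_not Finset.univ (fun i => φ i = 0) s
  have hφ0 : φ (0 : ZMod n) = 0 := map_zero φ
  have hφ1 : φ (1 : ZMod n) = 1 := map_one φ
  by_cases hc : (∑ i, s i) / 2 ≤ cls 0
  · exact ⟨0, followBob, fun τ => by rw [key 0 τ, hφ0]; exact hc⟩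
  · refine ⟨1, followBob, fun τ => ?_⟩
    rw [key 1 τ, hφ1]
    push_neg at hc
    linarith
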